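/- Let ν ∈ M with Fourier coefficients c_k = c_k(ν), k = 0,1,2,…, and let δ be a weakly continuous metric on M. Then ρ_δ(F_{c_{0:n}}) → 0 as n → ∞. -/

import Mathlib

open MeasureTheory Complex Filter Topology
open scoped ENNReal

noncomputable section

instance : Fact (0 < 2 * Real.pi) := ⟨by positivity⟩

/-- The unit circle `𝕋`, identified with `(−π,π]`, formalized as `ℝ / 2πℤ`. -/
abbrev UnitCirc : Type := AddCircle (2 * Real.pi)

/-- `M`: the space of finite nonnegative Borel measures on `𝕋`, equipped with
the topology of weak convergence. -/
abbrev MSp : Type := MeasureTheory.FiniteMeasure UnitCirc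

/-- The `k`-th Fourier coefficient (covariance) `c_k(μ) = (1/2π) ∫ e^{−ikθ} dμ(θ)`. -/
def covCoeff (μ : MSp) (k : ℕ) : ℂ :=
  ((2 * Real.pi : ℝ) : ℂ)⁻¹ * ∫ θ, fourier (-(k : ℤ)) θ ∂(μ : Measure UnitCirc)

/-- The uncertainty set `F_{c_{0:n}}` (exact covariance matching). -/
def Fset (n : ℕ) (c : ℕ → ℂ) : Set MSp :=
  {μ | ∀ k ≤ n, covCoeff μ k = c k}

/-- The diameter `ρ_δ(F)` of a set of measures, valued in `[0,∞]`. -/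
def diamE (δ : MSp → MSp → ℝ) (F : Set MSp) : ℝ≥0∞ :=
  ⨆ μ0 ∈ F, ⨆ μ1 ∈ F, ENNReal.ofReal (δ μ0 μ1)

open Set Submodule

/-- Continuous functions on the (compact) circle are integrable against finite measures. -/
lemma integrable_cm (μ : MSp) (P : C(UnitCirc, ℂ)) :
    Integrable (fun θ => P θ) (μ : Measure UnitCirc) :=
  P.continuous.integrable_of_hasCompactSupport (HasCompactSupport.of_compactSpace _)

/-- Matching covariances up to order `n` forces matching integrals of `fourier i`
for all `|i| ≤ n` (negative frequencies follow by conjugation, since measures are real). -/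
lemma integral_fourier_eq {ν μ : MSp} {n : ℕ} (h : μ ∈ Fset n (covCoeff ν))
    (i : ℤ) (hi : i.natAbs ≤ n) :
    ∫ θ, fourier i θ ∂(μ : Measure UnitCirc) = ∫ θ, fourier i θ ∂(ν : Measure UnitCirc) := by
  have key : ∀ k : ℕ, k ≤ n →
      ∫ θ, fourier (-(k : ℤ)) θ ∂(μ : Measure UnitCirc)
        = ∫ θ, fourier (-(k : ℤ)) θ ∂(ν : Measure UnitCirc) := by
    intro k hk
    have := h k hk
    unfold covCoeff at this
    have h2 : ((2 * Real.pi : ℝ) : ℂ)⁻¹ ≠ 0 := by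
      simp [Real.pi_ne_zero]
    exact mul_left_cancel₀ h2 this
  rcases le_or_gt 0 i with hi0 | hi0
  · lift i to ℕ using hi0 with k
    have hc : ∀ (ρ : MSp), ∫ θ, fourier (k:ℤ) θ ∂(ρ : Measure UnitCirc)
        = starRingEnd ℂ (∫ θ, fourier (-(k:ℤ)) θ ∂(ρ : Measure UnitCirc)) := by
      intro ρ
      rw [← integral_conj]
      congr 1
      ext θ
      rw [← fourier_neg, neg_neg]
    rw [hc μ, hc ν, key k (by simpa using hi)]
  · obtain ⟨k, rfl⟩ : ∃ k : ℕ, i = -(k : ℤ) := ⟨i.natAbs, by omega⟩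
    exact key k (by simpa using hi)

/-- Matching covariances up to a sufficiently high order forces matching integrals of any
fixed trigonometric polynomial. -/
lemma integral_span_eq (ν : MSp) (P : C(UnitCirc, ℂ))
    (hP : P ∈ span ℂ (range (@fourier (2 * Real.pi)))) :
    ∃ N : ℕ, ∀ n ≥ N, ∀ μ ∈ Fset n (covCoeff ν),
      ∫ θ, P θ ∂(μ : Measure UnitCirc) = ∫ θ, P θ ∂(ν : Measure UnitCirc) := by
  rw [Finsupp.mem_span_range_iff_exists_finsupp] at hP
  obtain ⟨c, hc⟩ := hP
  refine ⟨(c.support.sup fun i => i.natAbs), fun n hn μ hμ => ?_⟩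
  have hPeq : ∀ θ : UnitCirc, P θ = ∑ i ∈ c.support, c i * fourier i θ := by
    intro θ
    rw [← hc]
    simp [Finsupp.sum]
  have hint : ∀ (ρ : MSp), ∫ θ, P θ ∂(ρ : Measure UnitCirc)
      = ∑ i ∈ c.support, c i * ∫ θ, fourier i θ ∂(ρ : Measure UnitCirc) := by
    intro ρ
    simp_rw [hPeq]
    rw [integral_finset_sum]
    · simp_rw [integral_const_mul]
    · intro i _
      exact ((fourier i).continuous.integrable_of_hasCompactSupport
        (HasCompactSupport.of_compactSpace _)).const_mul _
  rw [hint, hint]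
  refine Finset.sum_congr rfl fun i hi => ?_
  rw [integral_fourier_eq hμ i (le_trans (Finset.le_sup hi) hn)]

/-- Matching the zeroth covariance forces equality of total masses. -/
lemma mass_eq {ν μ : MSp} {n : ℕ} (h : μ ∈ Fset n (covCoeff ν)) :
    (((μ : Measure UnitCirc) Set.univ).toReal : ℝ)
      = ((ν : Measure UnitCirc) Set.univ).toReal := by
  have := integral_fourier_eq h 0 (by simp)
  simp only [fourier_zero, integral_const, smul_eq_mul, mul_one, measure_univ] at this
  have h2 : (((↑μ : Measure UnitCirc) Set.univ).toReal : ℂ)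
      = (((↑ν : Measure UnitCirc) Set.univ).toReal : ℂ) := by
    have h3 : FiniteMeasure.mass μ = FiniteMeasure.mass ν := by
      simpa [Complex.real_smul] using this
    rw [← FiniteMeasure.ennreal_mass, ← FiniteMeasure.ennreal_mass, h3]
  exact_mod_cast h2

/-- Any sequence of measures matching the covariances of `ν` up to orders tending to infinity
converges weakly to `ν`. -/
lemma tendsto_nu (ν : MSp) (nn : ℕ → ℕ) (hn : Tendsto nn atTop atTop)
    (μ : ℕ → MSp) (hμ : ∀ j, μ j ∈ Fset (nn j) (covCoeff ν)) :
    Tendsto μ atTop (𝓝 ν) := by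
  rw [FiniteMeasure.tendsto_iff_forall_integral_tendsto]
  intro f
  rw [Metric.tendsto_atTop]
  intro ε hε
  set m := ((ν : Measure UnitCirc) Set.univ).toReal with hm
  have hm0 : (0:ℝ) ≤ m := ENNReal.toReal_nonneg
  set g : C(UnitCirc, ℂ) :=
    ⟨fun θ => ((f θ : ℝ) : ℂ), Complex.continuous_ofReal.comp f.continuous⟩ with hgdef
  have hεd : 0 < ε / (2 * (m + 1)) := by positivity
  have hg : g ∈ closure ((span ℂ (range (@fourier (2 * Real.pi)))) : Set C(UnitCirc, ℂ)) := by
    rw [← Submodule.topologicalClosure_coe, span_fourier_closure_eq_top]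
    trivial
  obtain ⟨P, hPmem, hPd⟩ := Metric.mem_closure_iff.mp hg _ hεd
  obtain ⟨N, hN⟩ := integral_span_eq ν P hPmem
  obtain ⟨J, hJ⟩ := eventually_atTop.mp (hn.eventually_ge_atTop N)
  refine ⟨J, fun j hj => ?_⟩
  have hmass : ((μ j : Measure UnitCirc) Set.univ).toReal = m := mass_eq (hμ j)
  have key : ∀ ρ : MSp, ((∫ x, f x ∂(ρ : Measure UnitCirc) : ℝ) : ℂ)
      = ∫ θ, g θ ∂(ρ : Measure UnitCirc) := by
    intro ρ
    rw [hgdef]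
    exact (integral_ofReal).symm
  have hbound : ∀ ρ : MSp, ‖∫ θ, (g θ - P θ) ∂(ρ : Measure UnitCirc)‖
      ≤ dist g P * ((ρ : Measure UnitCirc) Set.univ).toReal := by
    intro ρ
    apply norm_integral_le_of_norm_le_const
    filter_upwards with θ
    calc ‖g θ - P θ‖ = dist (g θ) (P θ) := by rw [dist_eq_norm]
    _ ≤ dist g P := ContinuousMap.dist_apply_le_dist θ
  have hsplit : (∫ θ, g θ ∂(μ j : Measure UnitCirc)) - ∫ θ, g θ ∂(ν : Measure UnitCirc)
      = (∫ θ, (g θ - P θ) ∂(μ j : Measure UnitCirc))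
        - ∫ θ, (g θ - P θ) ∂(ν : Measure UnitCirc) := by
    rw [integral_sub (integrable_cm _ g) (integrable_cm _ P),
        integral_sub (integrable_cm _ g) (integrable_cm _ P),
        hN (nn j) (hJ j hj) (μ j) (hμ j)]
    ring
  have hdist : dist (∫ x, f x ∂(μ j : Measure UnitCirc)) (∫ x, f x ∂(ν : Measure UnitCirc))
      = ‖(∫ θ, g θ ∂(μ j : Measure UnitCirc)) - ∫ θ, g θ ∂(ν : Measure UnitCirc)‖ := by
    rw [← key, ← key, Real.dist_eq, ← Complex.ofReal_sub, Complex.norm_real, Real.norm_eq_abs]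
  rw [hdist, hsplit]
  have h1 := hbound (μ j)
  have h2 := hbound ν
  rw [hmass] at h1
  rw [← hm] at h2
  have := norm_sub_le (∫ θ, (g θ - P θ) ∂(μ j : Measure UnitCirc))
    (∫ θ, (g θ - P θ) ∂(ν : Measure UnitCirc))
  have hd0 : 0 ≤ dist g P := dist_nonneg
  have hdm : dist g P * (2 * (m + 1)) < ε := (lt_div_iff₀ (by positivity)).mp hPd
  nlinarith [this, h1, h2, hdm, hd0, mul_le_mul_of_nonneg_left (show m ≤ m + 1 by linarith) hd0]

/-- If `δ` is a weakly continuous metric on `M` and `c_k = c_k(ν)`,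
then `ρ_δ(F_{c_{0:n}}) → 0` as `n → ∞`. -/
theorem stmt1 (ν : MSp) (δ : MSp → MSp → ℝ)
    (hm₀ : ∀ μ0 μ1 : MSp, δ μ0 μ1 = 0 ↔ μ0 = μ1)
    (hm₁ : ∀ μ0 μ1 : MSp, δ μ0 μ1 = δ μ1 μ0)
    (hm₂ : ∀ μ0 μ1 μ2 : MSp, δ μ0 μ2 ≤ δ μ0 μ1 + δ μ1 μ2)
    (hcont : Continuous (fun p : MSp × MSp => δ p.1 p.2)) :
    Tendsto (fun n => diamE δ (Fset n (covCoeff ν))) atTop (nhds 0) := by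
  by_contra hcon
  rw [ENNReal.tendsto_nhds_zero] at hcon
  push_neg at hcon
  obtain ⟨ε, hε, hfreq⟩ := hcon
  have hfreq' : ∃ᶠ n in atTop, min ε 1 < diamE δ (Fset n (covCoeff ν)) := by
    refine hfreq.mono fun n hn => ?_
    exact lt_of_le_of_lt (min_le_left _ _) hn
  set ε' : ℝ≥0∞ := min ε 1 with hε'def
  have hε'pos : 0 < ε' := lt_min hε zero_lt_one
  have hε'top : ε' ≠ ⊤ := ne_top_of_le_ne_top ENNReal.one_ne_top (min_le_right _ _)
  obtain ⟨φ, hφmono, hφ⟩ := Filter.extraction_of_frequently_atTop hfreq'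
  have H : ∀ j, ∃ μ0, μ0 ∈ Fset (φ j) (covCoeff ν) ∧ ∃ μ1,
      μ1 ∈ Fset (φ j) (covCoeff ν) ∧ ε' < ENNReal.ofReal (δ μ0 μ1) := by
    intro j
    have := hφ j
    simpa [diamE, lt_iSup_iff] using this
  choose μ0 h0 μ1 h1 hδ using H
  have hφtop : Tendsto φ atTop atTop := hφmono.tendsto_atTop
  have t0 := tendsto_nu ν φ hφtop μ0 h0
  have t1 := tendsto_nu ν φ hφtop μ1 h1
  have tδ : Tendsto (fun j => δ (μ0 j) (μ1 j)) atTop (𝓝 (δ ν ν)) :=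
    (hcont.tendsto (ν, ν)).comp (t0.prodMk_nhds t1)
  rw [(hm₀ ν ν).mpr rfl] at tδ
  have hεR : 0 < ε'.toReal := ENNReal.toReal_pos hε'pos.ne' hε'top
  have hev : ∀ᶠ j in atTop, δ (μ0 j) (μ1 j) < ε'.toReal :=
    tδ.eventually_lt_const hεR
  obtain ⟨j, hjlt⟩ := hev.exists
  have : ε'.toReal < δ (μ0 j) (μ1 j) :=
    (ENNReal.lt_ofReal_iff_toReal_lt hε'top).mp (hδ j)
  linarith

end
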